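/- For every natural number n, Σ_{k=0}^{a(n)} b(k) = a(n)² + a(n) + n + 1, where a and b enumerate the odious and evil numbers in increasing order. -/

import Mathlib

/-- Sum of base-`d` digits of `n`. -/
def sdig (d n : ℕ) : ℕ := (Nat.digits d n).sum

/-- `t_d(n)`: base-`d` digit sum of `n`, reduced mod `d`. -/
def td (d n : ℕ) : ℕ := sdig d n % d

/-- `a_{j,d}(n)`: n-th natural (0-indexed, increasing) with base-`d` digit sum ≡ j mod d. -/
noncomputable def agen (d j n : ℕ) : ℕ := Nat.nth (fun k => sdig d k % d = j) n

/-- n-th odious number (binary digit sum odd), 0-indexed increasing. -/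
noncomputable def odious (n : ℕ) : ℕ := Nat.nth (fun k => (Nat.digits 2 k).sum % 2 = 1) n

/-- n-th evil number (binary digit sum even), 0-indexed increasing. -/
noncomputable def evil (n : ℕ) : ℕ := Nat.nth (fun k => (Nat.digits 2 k).sum % 2 = 0) n

/-- Thue–Morse sequence: parity of the binary digit sum. -/
def tm (n : ℕ) : ℕ := (Nat.digits 2 n).sum % 2

lemma tm_lt (n : ℕ) : tm n < 2 := Nat.mod_lt _ (by norm_num)

lemma tm_cases (n : ℕ) : tm n = 0 ∨ tm n = 1 := by have := tm_lt n; omega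

lemma tm_two_mul (k : ℕ) : tm (2 * k) = tm k := by
  rcases Nat.eq_zero_or_pos k with h | h
  · simp [h]
  · unfold tm
    rw [Nat.digits_def' (by norm_num) (by omega)]
    simp [Nat.mul_div_cancel_left, Nat.mul_mod_right]

lemma tm_two_mul_add_one (k : ℕ) : tm (2 * k + 1) = (tm k + 1) % 2 := by
  unfold tm
  rw [Nat.digits_def' (by norm_num) (by omega)]
  have h1 : (2 * k + 1) % 2 = 1 := by omega
  have h2 : (2 * k + 1) / 2 = k := by omega
  rw [h1, h2]
  simp [List.sum_cons, Nat.add_mod, Nat.add_comm]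

lemma countE_two_mul (k : ℕ) :
    Nat.count (fun k => (Nat.digits 2 k).sum % 2 = 0) (2 * k) = k := by
  induction k with
  | zero => simp
  | succ m ih =>
    have e : 2 * (m + 1) = (2 * m + 1) + 1 := by ring
    rw [e, Nat.count_succ, Nat.count_succ, ih]
    have h1 : (Nat.digits 2 (2 * m)).sum % 2 = tm m := tm_two_mul m
    have h2 : (Nat.digits 2 (2 * m + 1)).sum % 2 = (tm m + 1) % 2 := tm_two_mul_add_one m
    simp only [h1, h2]
    rcases tm_cases m with h | h <;> rw [h] <;> norm_num

lemma countO_two_mul (k : ℕ) :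
    Nat.count (fun k => (Nat.digits 2 k).sum % 2 = 1) (2 * k) = k := by
  induction k with
  | zero => simp
  | succ m ih =>
    have e : 2 * (m + 1) = (2 * m + 1) + 1 := by ring
    rw [e, Nat.count_succ, Nat.count_succ, ih]
    have h1 : (Nat.digits 2 (2 * m)).sum % 2 = tm m := tm_two_mul m
    have h2 : (Nat.digits 2 (2 * m + 1)).sum % 2 = (tm m + 1) % 2 := tm_two_mul_add_one m
    simp only [h1, h2]
    rcases tm_cases m with h | h <;> rw [h] <;> norm_num

lemma evil_eq (k : ℕ) : evil k = 2 * k + tm k := by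
  have hc : Nat.count (fun k => (Nat.digits 2 k).sum % 2 = 0) (2 * k + tm k) = k := by
    rcases tm_cases k with h | h
    · rw [h]; simpa using countE_two_mul k
    · rw [h, Nat.count_succ, countE_two_mul]
      have h1 : (Nat.digits 2 (2 * k)).sum % 2 = tm k := tm_two_mul k
      simp [h1, h]
  have hp : (Nat.digits 2 (2 * k + tm k)).sum % 2 = 0 := by
    rcases tm_cases k with h | h
    · rw [h]; exact (tm_two_mul k).trans h
    · rw [h]; rw [show (Nat.digits 2 (2*k+1)).sum % 2 = (tm k + 1) % 2 from tm_two_mul_add_one k, h]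
  have := Nat.nth_count (p := fun k => (Nat.digits 2 k).sum % 2 = 0) hp
  rw [hc] at this
  unfold evil
  exact this

lemma odious_eq (k : ℕ) : odious k = 2 * k + (1 - tm k) := by
  have hc : Nat.count (fun k => (Nat.digits 2 k).sum % 2 = 1) (2 * k + (1 - tm k)) = k := by
    rcases tm_cases k with h | h
    · rw [h, Nat.count_succ, countO_two_mul]
      have h1 : (Nat.digits 2 (2 * k)).sum % 2 = tm k := tm_two_mul k
      simp [h1, h]
    · rw [h]; simpa using countO_two_mul k
  have hp : (Nat.digits 2 (2 * k + (1 - tm k))).sum % 2 = 1 := by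
    rcases tm_cases k with h | h
    · rw [h]; rw [show (Nat.digits 2 (2*k+1)).sum % 2 = (tm k + 1) % 2 from tm_two_mul_add_one k, h]
    · rw [h]; exact (tm_two_mul k).trans h
  have := Nat.nth_count (p := fun k => (Nat.digits 2 k).sum % 2 = 1) hp
  rw [hc] at this
  unfold odious
  exact this

lemma odious_infinite : {k | (Nat.digits 2 k).sum % 2 = 1}.Infinite := by
  apply Set.infinite_of_injective_forall_mem (f := fun k : ℕ => 2 * k + (1 - tm k))
  · have mono : StrictMono (fun k : ℕ => 2 * k + (1 - tm k)) := by
      apply strictMono_nat_of_lt_succ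
      intro m
      have := tm_lt m; have := tm_lt (m + 1); simp; omega
    exact mono.injective
  · intro k
    show (Nat.digits 2 (2 * k + (1 - tm k))).sum % 2 = 1
    rcases tm_cases k with h | h
    · rw [h]; rw [show (Nat.digits 2 (2*k+1)).sum % 2 = (tm k + 1) % 2 from tm_two_mul_add_one k, h]
    · rw [h]; exact (tm_two_mul k).trans h

lemma sum_tm (M : ℕ) :
    ∑ k ∈ Finset.range M, tm k = Nat.count (fun k => (Nat.digits 2 k).sum % 2 = 1) M := by
  induction M with
  | zero => simp
  | succ m ih =>
    rw [Finset.sum_range_succ, Nat.count_succ, ih]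
    rcases tm_cases m with h | h <;> simp [tm] at h ⊢ <;> simp [h]

theorem stmt12 (n : ℕ) :
    ∑ k ∈ Finset.range (odious n + 1), evil k = (odious n) ^ 2 + odious n + n + 1 := by
  set m := odious n with hm
  have hsum : ∑ k ∈ Finset.range (m + 1), evil k
      = 2 * (∑ k ∈ Finset.range (m + 1), k) + ∑ k ∈ Finset.range (m + 1), tm k := by
    have h1 : ∑ k ∈ Finset.range (m + 1), evil k
        = ∑ k ∈ Finset.range (m + 1), (2 * k + tm k) :=
      Finset.sum_congr rfl fun k _ => evil_eq k
    rw [h1, Finset.sum_add_distrib, Finset.mul_sum]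
  have hgauss : 2 * (∑ k ∈ Finset.range (m + 1), k) = (m + 1) * m := by
    rw [mul_comm]
    exact Finset.sum_range_id_mul_two (m + 1)
  have htm : ∑ k ∈ Finset.range (m + 1), tm k = n + 1 := by
    rw [sum_tm]
    have : m = Nat.nth (fun k => (Nat.digits 2 k).sum % 2 = 1) n := hm
    rw [this]
    exact Nat.count_nth_succ_of_infinite odious_infinite n
  rw [hsum, hgauss, htm]
  ring
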